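/- Let C be an exact category with exact structure D, and let M be a class of objects of C. Then the class of D-conflations X ↣ Y ↠ Z such that Hom(M, Y) → Hom(M, Z) is surjective for every M ∈ 𝓜 (i.e., every object of 𝓜 is projective relative to the conflation) forms an exact structure on C. -/

import Mathlib

open CategoryTheory Limits ZeroObject

universe v u

variable {C : Type u} [CategoryTheory.Category.{v} C] [CategoryTheory.Preadditive C]
  [CategoryTheory.Limits.HasZeroObject C] [CategoryTheory.Limits.HasFiniteBiproducts C]

/-- An exact structure on an additive category in the sense of Quillen–Keller:
a class of kernel-cokernel pairs (conflations) satisfying the axioms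
[E0], [E1], [E2], [E2ᵒᵖ]. -/
structure ExactStructure (C : Type u) [CategoryTheory.Category.{v} C]
    [CategoryTheory.Preadditive C] [CategoryTheory.Limits.HasZeroObject C]
    [CategoryTheory.Limits.HasFiniteBiproducts C] where
  /-- the distinguished class of short exact sequences -/
  conf : ∀ ⦃X Y Z : C⦄, (X ⟶ Y) → (Y ⟶ Z) → Prop
  /-- every conflation is a kernel-cokernel pair -/
  kerCoker : ∀ {X Y Z : C} (i : X ⟶ Y) (d : Y ⟶ Z), conf i d →
    ∃ w : i ≫ d = 0,
      Nonempty (IsLimit (KernelFork.ofι i w)) ∧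
      Nonempty (IsColimit (CokernelCofork.ofπ d w))
  /-- [E0] the identity of the zero object is a deflation -/
  id_zero_deflation : ∃ (X : C) (i : X ⟶ (0 : C)), conf i (𝟙 (0 : C))
  /-- [E1] the composition of two deflations is a deflation -/
  comp_deflation : ∀ {Y Z W : C} (d : Y ⟶ Z) (e : Z ⟶ W),
    (∃ (X : C) (i : X ⟶ Y), conf i d) → (∃ (X : C) (i : X ⟶ Z), conf i e) →
    ∃ (X : C) (i : X ⟶ Y), conf i (d ≫ e)
  /-- [E2] pullbacks of deflations along arbitrary morphisms exist and are deflations -/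
  pullback_deflation : ∀ {Y Z Z' : C} (d : Y ⟶ Z) (f : Z' ⟶ Z),
    (∃ (X : C) (i : X ⟶ Y), conf i d) →
    ∃ (P : C) (p₁ : P ⟶ Y) (p₂ : P ⟶ Z') (comm : p₁ ≫ d = p₂ ≫ f),
      Nonempty (IsLimit (PullbackCone.mk p₁ p₂ comm)) ∧
      ∃ (X : C) (i : X ⟶ P), conf i p₂
  /-- [E2ᵒᵖ] pushouts of inflations along arbitrary morphisms exist and are inflations -/
  pushout_inflation : ∀ {X Y X' : C} (i : X ⟶ Y) (f : X ⟶ X'),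
    (∃ (Z : C) (d : Y ⟶ Z), conf i d) →
    ∃ (Q : C) (q₁ : Y ⟶ Q) (q₂ : X' ⟶ Q) (comm : i ≫ q₁ = f ≫ q₂),
      Nonempty (IsColimit (PushoutCocone.mk q₁ q₂ comm)) ∧
      ∃ (Z : C) (d : Q ⟶ Z), conf q₂ d

/-- `i` is an `E`-inflation. -/
def ExactStructure.Inflation (E : ExactStructure C) {X Y : C} (i : X ⟶ Y) : Prop :=
  ∃ (Z : C) (d : Y ⟶ Z), E.conf i d

/-- `d` is an `E`-deflation. -/
def ExactStructure.Deflation (E : ExactStructure C) {Y Z : C} (d : Y ⟶ Z) : Prop :=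
  ∃ (X : C) (i : X ⟶ Y), E.conf i d

/-- `X` is `D`-`E`-divisible: every `D`-inflation starting at `X` is an `E`-inflation. -/
def Divisible (D E : ExactStructure C) (X : C) : Prop :=
  ∀ {Y : C} (i : X ⟶ Y), D.Inflation i → E.Inflation i

/-- `Z` is `D`-`E`-flat: every `D`-deflation ending at `Z` is an `E`-deflation. -/
def Flat (D E : ExactStructure C) (Z : C) : Prop :=
  ∀ {Y : C} (d : Y ⟶ Z), D.Deflation d → E.Deflation d

/-- `Ext¹_D(Z, X) = 0`: every `D`-conflation `X ↣ Y ↠ Z` splits. -/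
def ExtZero (D : ExactStructure C) (Z X : C) : Prop :=
  ∀ {Y : C} (i : X ⟶ Y) (d : Y ⟶ Z), D.conf i d → ∃ r : Y ⟶ X, i ≫ r = 𝟙 X

/-- `X` is `D`-injective: every `D`-inflation starting at `X` splits. -/
def DInjective (D : ExactStructure C) (X : C) : Prop :=
  ∀ {Y Z : C} (i : X ⟶ Y) (d : Y ⟶ Z), D.conf i d → ∃ r : Y ⟶ X, i ≫ r = 𝟙 X

/-- `Z` is `D`-projective: every `D`-deflation ending at `Z` splits. -/
def DProjective (D : ExactStructure C) (Z : C) : Prop :=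
  ∀ {X Y : C} (i : X ⟶ Y) (d : Y ⟶ Z), D.conf i d → ∃ s : Z ⟶ Y, s ≫ d = 𝟙 Z

/-- `E` is the exact structure `D`-projectively generated by `M`:
its conflations are exactly the `D`-conflations with respect to which
every object of `M` is projective. -/
def ProjGenBy (D E : ExactStructure C) (M : Set C) : Prop :=
  ∀ {X Y Z : C} (i : X ⟶ Y) (d : Y ⟶ Z),
    E.conf i d ↔ (D.conf i d ∧ ∀ M' ∈ M, ∀ g : M' ⟶ Z, ∃ h : M' ⟶ Y, h ≫ d = g)

/-- `E` is the exact structure `D`-injectively generated by `M`: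
its conflations are exactly the `D`-conflations with respect to which
every object of `M` is injective. -/
def InjGenBy (D E : ExactStructure C) (M : Set C) : Prop :=
  ∀ {X Y Z : C} (i : X ⟶ Y) (d : Y ⟶ Z),
    E.conf i d ↔ (D.conf i d ∧ ∀ M' ∈ M, ∀ g : X ⟶ M', ∃ h : Y ⟶ M', i ≫ h = g)

/-- `𝓐^{⊥_D}`. -/
def rightPerp (D : ExactStructure C) (A : Set C) : Set C :=
  {X | ∀ a ∈ A, ExtZero D a X}

/-- `^{⊥_D}𝓐`. -/
def leftPerp (D : ExactStructure C) (A : Set C) : Set C :=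
  {X | ∀ a ∈ A, ExtZero D X a}

/-- `(𝓐, 𝓑)` is a `D`-cotorsion pair. -/
def CotorsionPair (D : ExactStructure C) (A B : Set C) : Prop :=
  rightPerp D A = B ∧ leftPerp D B = A

/-- `C` has enough `D`-injectives. -/
def EnoughInjectives (D : ExactStructure C) : Prop :=
  ∀ X : C, ∃ (Y Z : C) (i : X ⟶ Y) (d : Y ⟶ Z), D.conf i d ∧ DInjective D Y

/-- `C` has enough `D`-projectives. -/
def EnoughProjectives (D : ExactStructure C) : Prop :=
  ∀ Z : C, ∃ (X Y : C) (i : X ⟶ Y) (d : Y ⟶ Z), D.conf i d ∧ DProjective D Y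

/-- The class of `D`-conflations with respect to which every object of `M` is
projective forms an exact structure on `C` (the `D`-projectively generated
exact structure `π_D⁻¹(M)`). -/
theorem projectively_generated_exact_structure
    (D : ExactStructure C) (M : Set C) :
    ∃ E : ExactStructure C, ProjGenBy D E M := by
  refine ⟨{
    conf := fun X Y Z i d =>
      D.conf i d ∧ ∀ M' ∈ M, ∀ g : M' ⟶ Z, ∃ h : M' ⟶ Y, h ≫ d = g
    kerCoker := fun i d hc => D.kerCoker i d hc.1
    id_zero_deflation := ?_
    comp_deflation := ?_
    pullback_deflation := ?_
    pushout_inflation := ?_ }, fun {X Y Z} i d => Iff.rfl⟩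
  · obtain ⟨X, i, hi⟩ := D.id_zero_deflation
    exact ⟨X, i, hi, fun M' _ g => ⟨g, Category.comp_id g⟩⟩
  · rintro Y Z W d e ⟨X₁, i₁, h₁, l₁⟩ ⟨X₂, i₂, h₂, l₂⟩
    obtain ⟨X, i, hD⟩ := D.comp_deflation d e ⟨X₁, i₁, h₁⟩ ⟨X₂, i₂, h₂⟩
    refine ⟨X, i, hD, fun M' hM g => ?_⟩
    obtain ⟨h', hh'⟩ := l₂ M' hM g
    obtain ⟨h, hh⟩ := l₁ M' hM h'
    exact ⟨h, by rw [← Category.assoc, hh, hh']⟩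
  · rintro Y Z Z' d f ⟨X, i, hD, lft⟩
    obtain ⟨P, p₁, p₂, comm, ⟨hl⟩, X', i', hP⟩ := D.pullback_deflation d f ⟨X, i, hD⟩
    refine ⟨P, p₁, p₂, comm, ⟨hl⟩, X', i', hP, fun M' hM g => ?_⟩
    obtain ⟨h, hh⟩ := lft M' hM (g ≫ f)
    exact ⟨PullbackCone.IsLimit.lift hl h g (by rw [hh]),
      PullbackCone.IsLimit.lift_snd hl h g (by rw [hh])⟩
  · rintro X Y X' i f ⟨Z, d, hD, lft⟩
    obtain ⟨Q, q₁, q₂, comm, ⟨hco⟩, Z₂, d₂, hQ⟩ := D.pushout_inflation i f ⟨Z, d, hD⟩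
    refine ⟨Q, q₁, q₂, comm, ⟨hco⟩, Z₂, d₂, hQ, fun M' hM g => ?_⟩
    obtain ⟨w, ⟨-, ⟨hcokd⟩⟩⟩ := D.kerCoker i d hD
    obtain ⟨w₂, ⟨-, ⟨hcokd₂⟩⟩⟩ := D.kerCoker q₂ d₂ hQ
    obtain ⟨u, hu⟩ := CokernelCofork.IsColimit.desc' hcokd (q₁ ≫ d₂)
      (by rw [← Category.assoc, comm, Category.assoc, w₂, comp_zero])
    simp only [Cofork.π_ofπ] at hu
    set t : Q ⟶ Z := PushoutCocone.IsColimit.desc hco d 0 (by rw [w, comp_zero]) with ht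
    have ht₁ : q₁ ≫ t = d := PushoutCocone.IsColimit.inl_desc hco d 0 _
    have ht₂ : q₂ ≫ t = (0 : X' ⟶ Z) := PushoutCocone.IsColimit.inr_desc hco d 0 _
    obtain ⟨v, hv⟩ := CokernelCofork.IsColimit.desc' hcokd₂ t ht₂
    simp only [Cofork.π_ofπ] at hv
    have htu : t ≫ u = d₂ := by
      apply PushoutCocone.IsColimit.hom_ext hco
      · simp only [PushoutCocone.mk_inl]
        show q₁ ≫ t ≫ u = q₁ ≫ d₂
        rw [← Category.assoc, ht₁, hu]
      · simp only [PushoutCocone.mk_inr]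
        show q₂ ≫ t ≫ u = q₂ ≫ d₂
        rw [← Category.assoc, ht₂, zero_comp, w₂]
    have hvu : v ≫ u = 𝟙 Z₂ := by
      apply Cofork.IsColimit.hom_ext hcokd₂
      simp only [Cofork.π_ofπ]
      rw [← Category.assoc, hv, htu]
      exact (Category.comp_id d₂).symm
    obtain ⟨h, hh⟩ := lft M' hM (g ≫ v)
    refine ⟨h ≫ q₁, ?_⟩
    rw [Category.assoc, ← hu, ← Category.assoc, hh, Category.assoc, hvu, Category.comp_id]
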